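/- Let r ≥ 2, let p < p' be coprime positive integers, and let 0 ≤ j ≤ r − 1. Define E(λ,w) = (pp'/2)‖λ‖² − p'⟨λ,δ⟩ + p⟨λ, w•δ⟩ − ⟨δ, w•δ − δ⟩ for λ ∈ V, w ∈ S_r. Then for every x ∈ ℚ the set L_x = {(λ,w) : λ ∈ jΛ_1 + Q_r, w ∈ S_r, E(λ,w) = x} is finite, and there exists N ∈ ℕ such that for all n ≥ N, {(λ,w) : λ ∈ Π_{r,j+nr}, w ∈ S_r, E(λ,w) = x} = L_x. (This is the coefficient-wise form of the statement that the shifted invariants J_{T(p,p')}(L_r((j+nr)Λ_1)) converge, as n → ∞, to the series whose exponent-x signed count is given by L_x.) -/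

import Mathlib

open Finset

noncomputable section

/-- Inner product `⟨u,v⟩ = Σ_i u i * v i` on `ℚ^r`. -/
def ip {r : ℕ} (u v : Fin r → ℚ) : ℚ := ∑ i, u i * v i

/-- Action of `S_r` permuting coordinates: `(w • v) i = v (w⁻¹ i)`. -/
def pact {r : ℕ} (w : Equiv.Perm (Fin r)) (v : Fin r → ℚ) : Fin r → ℚ := fun i => v (w⁻¹ i)

/-- The Weyl vector `δ`, whose (1-indexed) `i`-th coordinate is `(r+1-2i)/2`. -/
def weylδ (r : ℕ) : Fin r → ℚ := fun j => ((r : ℚ) - 1 - 2 * ((j : ℕ) : ℚ)) / 2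

/-- Membership in `V = {v : Fin r → ℚ | Σ_i v i = 0}`. -/
def memV {r : ℕ} (v : Fin r → ℚ) : Prop := ∑ i, v i = 0

/-- Membership in the root lattice `Q_r`. -/
def memQ {r : ℕ} (v : Fin r → ℚ) : Prop := memV v ∧ ∀ i, ∃ m : ℤ, v i = (m : ℚ)

/-- Membership in the weight lattice `P_r`. -/
def memP {r : ℕ} (v : Fin r → ℚ) : Prop := memV v ∧ ∀ i j, ∃ m : ℤ, v i - v j = (m : ℚ)

/-- The first fundamental weight `Λ₁ = ε₁ - (1/r)(ε₁ + ⋯ + ε_r)`. -/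
def Lam1 (r : ℕ) : Fin r → ℚ := fun j => (if (j : ℕ) = 0 then 1 else 0) - 1 / (r : ℚ)

/-- The simple roots, 0-indexed: `srootF i = ε_{i+1} - ε_{i+2}` in 1-indexed notation. -/
def srootF {r : ℕ} (i : Fin (r - 1)) : Fin r → ℚ :=
  fun j => (if (j : ℕ) = (i : ℕ) then 1 else 0) - (if (j : ℕ) = (i : ℕ) + 1 then 1 else 0)

/-- The highest root `θ = ε₁ - ε_r`. -/
def hroot (r : ℕ) : Fin r → ℚ :=
  fun j => (if (j : ℕ) = 0 then 1 else 0) - (if (j : ℕ) = r - 1 then 1 else 0)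

/-- The set `Π_{r,n}` of weights of `L_r(nΛ₁)`:
all `nΛ₁ - a₁α₁ - ⋯ - a_{r-1}α_{r-1}` with `n ≥ a₁ ≥ ⋯ ≥ a_{r-1} ≥ 0`. -/
def PiWts (r n : ℕ) : Set (Fin r → ℚ) :=
  {v | ∃ a : Fin (r - 1) → ℤ, (∀ i, 0 ≤ a i) ∧ (∀ i, a i ≤ (n : ℤ)) ∧
        (∀ i j, i ≤ j → a j ≤ a i) ∧
        v = (n : ℚ) • Lam1 r - ∑ i, (a i : ℚ) • srootF i}

/-- The exponent `E(α,w) = (pp'/2)‖α‖² - p'⟨α,δ⟩ + p⟨α,w•δ⟩ - ⟨δ, w•δ - δ⟩`. -/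
def Eexp (r p p' : ℕ) (α : Fin r → ℚ) (w : Equiv.Perm (Fin r)) : ℚ :=
  ((p : ℚ) * p' / 2) * ip α α - p' * ip α (weylδ r) + p * ip α (pact w (weylδ r))
    - ip (weylδ r) (pact w (weylδ r) - weylδ r)


lemma rat_abs_le_max (t R : ℚ) (h : t^2 ≤ R) : |t| ≤ max 1 R := by
  rcases le_or_gt |t| 1 with h1 | h1
  · exact h1.trans (le_max_left _ _)
  · refine le_trans ?_ (le_max_right _ _)
    nlinarith [abs_nonneg t, sq_abs t]

lemma finite_bounded (r : ℕ) (t : ℚ) (K : ℤ) (S : Set (Fin r → ℚ))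
    (h : ∀ v ∈ S, ∀ i, ∃ m : ℤ, v i + t = (m : ℚ) ∧ |m| ≤ K) : S.Finite := by
  have hfin : (Set.pi Set.univ (fun _ : Fin r => Set.Icc (-K) K)).Finite :=
    Set.Finite.pi (fun _ => Set.finite_Icc _ _)
  have key : ∀ v ∈ S, ∀ i, (⌊v i + t⌋ : ℚ) = v i + t ∧ ⌊v i + t⌋ ∈ Set.Icc (-K) K := by
    intro v hv i
    obtain ⟨m, hm, hmK⟩ := h v hv i
    rw [hm, Int.floor_intCast]
    exact ⟨rfl, by rw [Set.mem_Icc]; constructor <;> [linarith [neg_abs_le m]; linarith [le_abs_self m]]⟩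
  apply Set.Finite.of_finite_image (f := fun v => fun i => ⌊v i + t⌋)
  · apply hfin.subset
    rintro _ ⟨v, hv, rfl⟩
    intro i _
    exact (key v hv i).2
  · intro v hv v' hv' hvv
    funext i
    have h1 := (key v hv i).1
    have h2 := (key v' hv' i).1
    have : ⌊v i + t⌋ = ⌊v' i + t⌋ := congrFun hvv i
    rw [this, h2] at h1
    linarith [h1]

lemma sum_ind (r t : ℕ) (h : t < r) : ∑ i : Fin r, (if (i : ℕ) = t then (1:ℚ) else 0) = 1 := by
  rw [Finset.sum_eq_single (⟨t, h⟩ : Fin r)]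
  · simp
  · intro b _ hb
    simp only [ite_eq_right_iff]
    intro hbt
    exact absurd (Fin.ext hbt : b = ⟨t, h⟩) hb
  · simp

lemma sum_pick {r : ℕ} (b : Fin (r-1) → ℚ) (t : ℕ) :
    ∑ k : Fin (r-1), (if t = (k : ℕ) then b k else 0)
      = if h : t < r - 1 then b ⟨t, h⟩ else 0 := by
  split
  · next h =>
    rw [Finset.sum_eq_single (⟨t, h⟩ : Fin (r-1))]
    · simp
    · intro k _ hk
      simp only [ite_eq_right_iff]
      intro hbt
      exact absurd (Fin.ext hbt.symm : k = ⟨t, h⟩) hk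
    · simp
  · next h =>
    apply Finset.sum_eq_zero
    intro k _
    rw [if_neg]
    intro he
    exact h (he ▸ k.isLt)

lemma sum_sroot {r : ℕ} (b : Fin (r-1) → ℚ) (i : Fin r) :
    (∑ k, b k • srootF k) i
      = (if h : (i : ℕ) < r - 1 then b ⟨i, h⟩ else 0)
        - (if h : ((i : ℕ) - 1 < r - 1) ∧ (i : ℕ) ≠ 0 then b ⟨(i : ℕ) - 1, h.1⟩ else 0) := by
  rw [Finset.sum_apply]
  simp only [Pi.smul_apply, smul_eq_mul, srootF, mul_sub, mul_ite, mul_one, mul_zero]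
  rw [Finset.sum_sub_distrib, sum_pick]
  congr 1
  rcases Nat.eq_zero_or_pos (i : ℕ) with h0 | h0
  · rw [dif_neg (by simp [h0])]
    apply Finset.sum_eq_zero
    intro k _
    rw [if_neg (by omega)]
  · have : ∀ k : Fin (r-1), ((i : ℕ) = (k : ℕ) + 1) = ((i : ℕ) - 1 = (k : ℕ)) := by
      intro k; apply propext; omega
    simp only [this]
    rw [sum_pick]
    rcases lt_or_ge ((i:ℕ) - 1) (r-1) with h | h
    · rw [dif_pos h, dif_pos ⟨h, by omega⟩]
    · rw [dif_neg (by omega), dif_neg (by push_neg; intro hc; omega)]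

lemma finite_fiber (r p p' j : ℕ) (hr : 2 ≤ r) (hp : 1 ≤ p) (hpp' : p < p') (x : ℚ)
    (w : Equiv.Perm (Fin r)) :
    {v : Fin r → ℚ | (∃ β, memQ β ∧ v = (j : ℚ) • Lam1 r + β) ∧ Eexp r p p' v w = x}.Finite := by
  have hrQ : (0:ℚ) < (r:ℚ) := by exact_mod_cast (by omega : 0 < r)
  set c : ℚ := (p : ℚ) * p' / 2 with hcdef
  have hc : 0 < c := by
    have h1 : (1:ℚ) ≤ (p:ℚ) := by exact_mod_cast hp
    have h2 : (1:ℚ) ≤ (p':ℚ) := by exact_mod_cast (by omega : 1 ≤ p')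
    rw [hcdef]; positivity
  set u : Fin r → ℚ := fun i => (p:ℚ) * (pact w (weylδ r)) i - (p':ℚ) * weylδ r i with hudef
  set d : ℚ := - ip (weylδ r) (pact w (weylδ r) - weylδ r) with hddef
  have hE : ∀ v : Fin r → ℚ, Eexp r p p' v w
      = c * (∑ i, (v i)^2) + (∑ i, u i * v i) + d := by
    intro v
    simp only [Eexp, ip, hudef, hddef, hcdef, Finset.mul_sum, ← Finset.sum_sub_distrib,
      ← Finset.sum_add_distrib]
    rw [← sub_neg_eq_add (b := -(∑ i, weylδ r i * (pact w (weylδ r) - weylδ r) i)), neg_neg]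
    rw [← Finset.sum_sub_distrib]
    exact Finset.sum_congr rfl fun i _ => by ring
  set A : ℚ := (x - d) + ∑ i, (u i)^2/(4*c) with hAdef
  set U : ℚ := ∑ i, |u i| with hUdef
  set B : ℚ := max 1 (A/c) + U/(2*c) with hBdef
  set K : ℤ := ⌈B + (j:ℚ)⌉ with hKdef
  apply finite_bounded r ((j:ℚ)/r) K
  rintro v ⟨⟨β, hβ, hvβ⟩, hEx⟩ i
  obtain ⟨m, hm⟩ := hβ.2 i
  have hval : v i + (j:ℚ)/r = (((if (i:ℕ) = 0 then (j:ℤ) else 0) + m : ℤ) : ℚ) := by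
    have : v i = (j:ℚ) * Lam1 r i + β i := by rw [hvβ]; simp
    rw [this, hm, Lam1]
    push_cast
    split <;> field_simp <;> ring
  refine ⟨_, hval, ?_⟩
  have hE' : c * (∑ i, (v i)^2) + ∑ i, u i * v i = x - d := by
    have := hE v; rw [hEx] at this; linarith
  have hterm : ∀ k : Fin r, 0 ≤ c * (v k)^2 + u k * v k + (u k)^2/(4*c) := by
    intro k
    have : c * (v k)^2 + u k * v k + (u k)^2/(4*c) = (2*c*(v k) + u k)^2 / (4*c) := by
      field_simp; ring
    rw [this]; positivity
  have hsum : ∑ k, (c * (v k)^2 + u k * v k + (u k)^2/(4*c)) = A := by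
    rw [Finset.sum_add_distrib, Finset.sum_add_distrib, ← Finset.mul_sum, hAdef]
    linarith [hE']
  have hsingle : c * (v i)^2 + u i * v i + (u i)^2/(4*c) ≤ A := by
    rw [← hsum]
    exact Finset.single_le_sum (fun k _ => hterm k) (Finset.mem_univ i)
  have hsq : (v i + u i/(2*c))^2 ≤ A / c := by
    rw [le_div_iff₀ hc]
    have key : (v i + u i/(2*c))^2 * c = c * (v i)^2 + u i * v i + (u i)^2/(4*c) := by
      field_simp; ring
    rw [key]; exact hsingle
  have habs1 : |v i + u i/(2*c)| ≤ max 1 (A/c) := rat_abs_le_max _ _ hsq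
  have habsu : |u i| ≤ U := Finset.single_le_sum (fun k _ => abs_nonneg (u k)) (Finset.mem_univ i)
  have h2 : |u i/(2*c)| = |u i| / (2*c) := by
    rw [abs_div, abs_of_pos (by linarith : (0:ℚ) < 2*c)]
  have h1 : |v i| ≤ |v i + u i/(2*c)| + |u i|/(2*c) := by
    calc |v i| = |(v i + u i/(2*c)) + -(u i/(2*c))| := by congr 1; ring
    _ ≤ |v i + u i/(2*c)| + |-(u i/(2*c))| := abs_add_le _ _
    _ = |v i + u i/(2*c)| + |u i|/(2*c) := by rw [abs_neg, h2]
  have hdivle : |u i|/(2*c) ≤ U/(2*c) := by gcongr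
  have hvi : |v i| ≤ B := by rw [hBdef]; linarith
  have hjr : (j:ℚ)/r ≤ (j:ℚ) := by
    rw [div_le_iff₀ hrQ]
    have h1r : (1:ℚ) ≤ (r:ℚ) := by exact_mod_cast (by omega : 1 ≤ r)
    nlinarith [Nat.cast_nonneg (α := ℚ) j]
  have habsm : |(((if (i:ℕ) = 0 then (j:ℤ) else 0) + m : ℤ) : ℚ)| ≤ B + (j:ℚ) := by
    rw [← hval]
    calc |v i + (j:ℚ)/r| ≤ |v i| + |(j:ℚ)/r| := abs_add_le _ _
    _ = |v i| + (j:ℚ)/r := by rw [abs_of_nonneg (div_nonneg (Nat.cast_nonneg j) (le_of_lt hrQ))]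
    _ ≤ B + (j:ℚ) := by linarith
  have hK : B + (j:ℚ) ≤ (K:ℚ) := Int.le_ceil _
  have : |(((if (i:ℕ) = 0 then (j:ℤ) else 0) + m : ℤ) : ℚ)| ≤ (K:ℚ) := le_trans habsm hK
  exact_mod_cast this

lemma sum_Lam1 (r : ℕ) (hr : 1 ≤ r) : ∑ i, Lam1 r i = 0 := by
  simp only [Lam1]
  rw [Finset.sum_sub_distrib, sum_ind r 0 (by omega)]
  simp only [Finset.sum_const, Finset.card_univ, Fintype.card_fin, nsmul_eq_mul]
  have : (r:ℚ) ≠ 0 := by exact_mod_cast (by omega : r ≠ 0)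
  field_simp
  norm_num

lemma sum_srootF {r : ℕ} (k : Fin (r-1)) : ∑ i : Fin r, srootF k i = 0 := by
  have hk := k.isLt
  simp only [srootF]
  rw [Finset.sum_sub_distrib, sum_ind r k (by omega), sum_ind r ((k:ℕ)+1) (by omega)]
  ring

lemma pi_subset_coset (r j n : ℕ) (hr : 2 ≤ r) (v : Fin r → ℚ)
    (hv : v ∈ PiWts r (j + n * r)) : ∃ β, memQ β ∧ v = (j : ℚ) • Lam1 r + β := by
  obtain ⟨a, _, _, _, hveq⟩ := hv
  have hrne : (r:ℚ) ≠ 0 := by exact_mod_cast (by omega : r ≠ 0)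
  refine ⟨fun i => v i - (j:ℚ) * Lam1 r i, ⟨?_, ?_⟩, by funext i; simp⟩
  · -- memV
    show ∑ i, (v i - (j:ℚ) * Lam1 r i) = 0
    rw [Finset.sum_sub_distrib, ← Finset.mul_sum, sum_Lam1 r (by omega), mul_zero, sub_zero]
    rw [hveq]
    have : ∑ i, (((j + n*r : ℕ):ℚ) • Lam1 r - ∑ k, ((a k : ℚ)) • srootF k) i
        = ∑ i, (((j + n*r : ℕ):ℚ) * Lam1 r i - ∑ k, (a k : ℚ) * srootF k i) := by
      apply Finset.sum_congr rfl; intro i _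
      simp [Finset.sum_apply]
    rw [this, Finset.sum_sub_distrib, ← Finset.mul_sum, sum_Lam1 r (by omega), mul_zero]
    rw [Finset.sum_comm]
    simp only [← Finset.mul_sum, sum_srootF, mul_zero, Finset.sum_const_zero, sub_zero]
  · -- integer coordinates
    intro i
    rw [hveq]
    refine ⟨(n*r : ℤ) * (if (i:ℕ) = 0 then 1 else 0) - n
      - ((if h : (i:ℕ) < r - 1 then a ⟨i, h⟩ else 0)
        - (if h : ((i:ℕ) - 1 < r - 1) ∧ (i:ℕ) ≠ 0 then a ⟨(i:ℕ)-1, h.1⟩ else 0)), ?_⟩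
    have hs := sum_sroot (r := r) (fun k => (a k : ℚ)) i
    simp only [Pi.sub_apply, Pi.smul_apply, smul_eq_mul, hs, Lam1]
    push_cast
    split_ifs <;> field_simp <;> ring

lemma eventually_mem_Pi (r j : ℕ) (hr : 2 ≤ r) (v : Fin r → ℚ) (β : Fin r → ℚ)
    (hβ : memQ β) (hvβ : v = (j : ℚ) • Lam1 r + β) :
    ∃ N : ℕ, ∀ n : ℕ, N ≤ n → v ∈ PiWts r (j + n * r) := by
  classical
  have hrne : (r:ℚ) ≠ 0 := by exact_mod_cast (by omega : r ≠ 0)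
  -- integer coordinates of β
  choose Bc hBc using hβ.2
  set Bf : ℕ → ℤ := fun l => if h : l < r then Bc ⟨l, h⟩ else 0 with hBf
  set SB : ℕ → ℤ := fun t => ∑ l ∈ Finset.range (t+1), Bf l with hSB
  -- total sum is zero
  have hsumB : ∑ l : Fin r, Bc l = 0 := by
    have h0 : ∑ l : Fin r, β l = 0 := hβ.1
    have : ((∑ l : Fin r, Bc l : ℤ) : ℚ) = 0 := by
      push_cast
      rw [← h0]
      exact Finset.sum_congr rfl fun l _ => (hBc l).symm
    exact_mod_cast this
  have hSBtop : SB (r-1) = 0 := by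
    rw [hSB]
    simp only
    rw [show r - 1 + 1 = r by omega, ← Fin.sum_univ_eq_sum_range, ← hsumB]
    apply Finset.sum_congr rfl
    intro l _
    simp [hBf, l.isLt]
  set M : ℕ := (Finset.range r).sup (fun t => (SB t).natAbs) with hM
  have hMle : ∀ t, t < r → (SB t).natAbs ≤ M := fun t ht =>
    Finset.le_sup (f := fun t => (SB t).natAbs) (Finset.mem_range.mpr ht)
  refine ⟨2 * M, fun n hn => ?_⟩
  have hnZ : (2 * M : ℤ) ≤ (n : ℤ) := by exact_mod_cast hn
  have hn0 : (0:ℤ) ≤ (n:ℤ) := by positivity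
  -- the coefficients
  refine ⟨fun k => (n:ℤ) * ((r:ℤ) - 1 - (k:ℕ)) - SB k, ?_, ?_, ?_, ?_⟩
  · intro k
    show 0 ≤ (n:ℤ) * ((r:ℤ) - 1 - (k:ℕ)) - SB (k:ℕ)
    have hk := k.isLt
    have hSBk : ((SB k).natAbs : ℤ) ≤ (M:ℤ) := by exact_mod_cast hMle k (by omega)
    have hprod : 0 ≤ (n:ℤ) * ((r:ℤ) - 1 - (k:ℕ) - 1) := mul_nonneg hn0 (by omega)
    have hexp : (n:ℤ) * ((r:ℤ) - 1 - (k:ℕ)) = (n:ℤ) * ((r:ℤ) - 1 - (k:ℕ) - 1) + n := by ring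
    omega
  · intro k
    show (n:ℤ) * ((r:ℤ) - 1 - (k:ℕ)) - SB (k:ℕ) ≤ ((j + n*r : ℕ):ℤ)
    have hk := k.isLt
    have hSBk : ((SB k).natAbs : ℤ) ≤ (M:ℤ) := by exact_mod_cast hMle k (by omega)
    have hprod : 0 ≤ (n:ℤ) * ((k:ℕ):ℤ) := mul_nonneg hn0 (by positivity)
    have hexp : (n:ℤ) * (r:ℤ) - (n:ℤ) * ((r:ℤ) - 1 - (k:ℕ)) = (n:ℤ) * ((k:ℕ):ℤ) + n := by ring
    push_cast
    omega
  · intro k k' hkk'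
    show (n:ℤ) * ((r:ℤ) - 1 - (k':ℕ)) - SB (k':ℕ) ≤ (n:ℤ) * ((r:ℤ) - 1 - (k:ℕ)) - SB (k:ℕ)
    have hk := k.isLt
    have hk' := k'.isLt
    have hkk : (k:ℕ) ≤ (k':ℕ) := Fin.le_def.mp hkk'
    have hSBk : ((SB k).natAbs : ℤ) ≤ (M:ℤ) := by exact_mod_cast hMle k (by omega)
    have hSBk' : ((SB k').natAbs : ℤ) ≤ (M:ℤ) := by exact_mod_cast hMle k' (by omega)
    rcases eq_or_lt_of_le hkk with heq | hlt
    · rw [heq]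
    · have hprod : 0 ≤ (n:ℤ) * (((k':ℕ):ℤ) - ((k:ℕ):ℤ) - 1) := mul_nonneg hn0 (by omega)
      have hexp : (n:ℤ) * ((r:ℤ) - 1 - (k:ℕ)) - (n:ℤ) * ((r:ℤ) - 1 - (k':ℕ))
          = (n:ℤ) * (((k':ℕ):ℤ) - ((k:ℕ):ℤ) - 1) + n := by ring
      omega
  · -- the equation
    funext i
    have hvi : v i = (j:ℚ) * Lam1 r i + (Bc i : ℚ) := by
      rw [hvβ]; simp [← hBc i]
    show v i = ((j + n*r : ℕ):ℚ) * Lam1 r i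
        - (∑ k : Fin (r-1), ((((n:ℤ) * ((r:ℤ) - 1 - (k:ℕ)) - SB k : ℤ)) : ℚ) • srootF k) i
    rw [sum_sroot, hvi]
    have hir := i.isLt
    have hrq : (r:ℚ) ≠ 0 := hrne
    rcases Nat.lt_or_ge (i:ℕ) 1 with h0' | h1
    · -- i = 0
      have h0 : (i:ℕ) = 0 := by omega
      rw [dif_pos (show (i:ℕ) < r-1 by omega), dif_neg (by simp [h0])]
      have hSB0 : SB (i:ℕ) = Bc i := by
        rw [h0, hSB]
        simp only
        rw [Finset.sum_range_one, hBf]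
        simp only [dif_pos (show 0 < r by omega)]
        congr 1
        exact Fin.ext h0.symm
      simp only [Fin.val_mk, hSB0, Lam1, if_pos h0]
      push_cast [h0]
      field_simp
      ring
    rcases Nat.lt_or_ge (i:ℕ) (r-1) with hmid | htop
    · -- middle: 1 ≤ i < r-1
      rw [dif_pos hmid, dif_pos ⟨by omega, by omega⟩]
      have hstep : SB (i:ℕ) = SB ((i:ℕ)-1) + Bc i := by
        rw [hSB]
        simp only
        rw [show (i:ℕ)+1 = ((i:ℕ)-1+1)+1 by omega, Finset.sum_range_succ]
        congr 1
        rw [hBf]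
        simp only [dif_pos (show (i:ℕ)-1+1 < r by omega)]
        congr 1
        exact Fin.ext (by simp; omega)
      simp only [Fin.val_mk, Lam1, if_neg (by omega : ¬ (i:ℕ) = 0)]
      rw [hstep]
      push_cast [Nat.cast_sub (by omega : 1 ≤ (i:ℕ))]
      field_simp
      ring
    · -- top: i = r-1
      have htop' : (i:ℕ) = r - 1 := by omega
      rw [dif_neg (by omega), dif_pos ⟨by omega, by omega⟩]
      have hstep : SB ((i:ℕ)-1) = - Bc i := by
        have h1 : SB (r-1) = SB (r-2) + Bf (r-1) := by
          rw [hSB]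
          simp only
          rw [show r-1+1 = (r-2+1)+1 by omega, Finset.sum_range_succ]
          congr 2
          omega
        have h2 : Bf (r-1) = Bc i := by
          rw [hBf]
          simp only [dif_pos (show r-1 < r by omega)]
          congr 1
          exact Fin.ext (by simp; omega)
        have : SB ((i:ℕ)-1) = SB (r-2) := by rw [show (i:ℕ)-1 = r-2 by omega]
        rw [this]
        omega
      simp only [Fin.val_mk, Lam1, if_neg (by omega : ¬ (i:ℕ) = 0)]
      rw [hstep]
      push_cast [Nat.cast_sub (by omega : 1 ≤ (i:ℕ)), htop',
        Nat.cast_sub (by omega : 1 ≤ r), Nat.cast_sub (by omega : 1 ≤ r - 1)]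
      field_simp
      ring
/-- for each `x ∈ ℚ`, the set
`L_x = {(λ,w) : λ ∈ jΛ₁ + Q_r, w ∈ S_r, E(λ,w) = x}` is finite, and for all large
enough `n` it coincides with `{(λ,w) : λ ∈ Π_{r,j+nr}, w ∈ S_r, E(λ,w) = x}`
(coefficient-wise convergence of the shifted invariants). -/
theorem stmt12 (r p p' : ℕ) (hr : 2 ≤ r) (hp : 1 ≤ p) (hpp' : p < p')
    (hcop : Nat.Coprime p p') (j : ℕ) (hj : j ≤ r - 1) (x : ℚ) :
    ({lw : (Fin r → ℚ) × Equiv.Perm (Fin r) |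
        (∃ β, memQ β ∧ lw.1 = (j : ℚ) • Lam1 r + β) ∧ Eexp r p p' lw.1 lw.2 = x}.Finite) ∧
    (∃ N : ℕ, ∀ n : ℕ, N ≤ n →
      {lw : (Fin r → ℚ) × Equiv.Perm (Fin r) |
          lw.1 ∈ PiWts r (j + n * r) ∧ Eexp r p p' lw.1 lw.2 = x}
        = {lw : (Fin r → ℚ) × Equiv.Perm (Fin r) |
            (∃ β, memQ β ∧ lw.1 = (j : ℚ) • Lam1 r + β) ∧ Eexp r p p' lw.1 lw.2 = x}) := by
  classical
  have hfin : ({lw : (Fin r → ℚ) × Equiv.Perm (Fin r) |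
      (∃ β, memQ β ∧ lw.1 = (j : ℚ) • Lam1 r + β) ∧ Eexp r p p' lw.1 lw.2 = x}.Finite) := by
    apply Set.Finite.subset (Set.Finite.biUnion (Set.finite_univ (α := Equiv.Perm (Fin r)))
      (fun w _ => Set.Finite.image (fun v => (v, w))
        (finite_fiber r p p' j hr hp hpp' x w)))
    rintro ⟨v, w⟩ ⟨hc, hEx⟩
    exact Set.mem_biUnion (Set.mem_univ w) ⟨v, ⟨hc, hEx⟩, rfl⟩
  refine ⟨hfin, ?_⟩
  have hthr : ∀ lw ∈ hfin.toFinset, ∃ N : ℕ, ∀ n : ℕ, N ≤ n →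
      lw.1 ∈ PiWts r (j + n * r) := by
    intro lw hlw
    rw [Set.Finite.mem_toFinset] at hlw
    obtain ⟨⟨β, hβ, hvβ⟩, _⟩ := hlw
    exact eventually_mem_Pi r j hr lw.1 β hβ hvβ
  choose! Nf hNf using hthr
  refine ⟨hfin.toFinset.sup Nf, fun n hn => ?_⟩
  ext ⟨v, w⟩
  simp only [Set.mem_setOf_eq]
  constructor
  · rintro ⟨hvPi, hEx⟩
    exact ⟨pi_subset_coset r j n hr v hvPi, hEx⟩
  · rintro ⟨hc, hEx⟩
    refine ⟨?_, hEx⟩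
    have hmem : (v, w) ∈ hfin.toFinset := by
      rw [Set.Finite.mem_toFinset]; exact ⟨hc, hEx⟩
    exact hNf (v, w) hmem n (le_trans (Finset.le_sup hmem) hn)
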